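/- For any hypothesis class H with finite Littlestone dimension d and any integers k >= 0, the bound ELdim(H, k) <= sup { t : binom(t, <= k+1) <= binom(t, <= d) } holds; in particular if k >= d then ELdim(H, k) <= d. -/

import Mathlib

/-- A depth-`t` `X`-valued tree: a family of maps `x_s : {-1,+1}^(s-1) → X`. -/
def XTree (X : Type*) (t : ℕ) := (s : Fin t) → (Fin s.val → ℤ) → X

/-- A sign path: a sequence with entries in `{-1,+1}`. -/
def IsSignPath {t : ℕ} (ε : Fin t → ℤ) : Prop := ∀ s, ε s = 1 ∨ ε s = -1

/-- `S(H, x)`: the set of sign paths realized by some hypothesis `h ∈ H` along the tree `x`,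
i.e. `ε_s = h (x_s (ε_1, …, ε_{s-1}))` for all `s`. -/
def realizedPaths {X : Type*} (H : Set (X → ℤ)) {t : ℕ} (x : XTree X t) :
    Set (Fin t → ℤ) :=
  {ε | IsSignPath ε ∧ ∃ h ∈ H, ∀ s : Fin t,
    ε s = h (x s (fun i => ε ⟨i.val, i.isLt.trans s.isLt⟩))}

/-- The tree shattering coefficient `S(H, t)`: the maximum of `|S(H, x)|` over
all depth-`t` `X`-valued trees `x`. -/
noncomputable def treeShatter {X : Type*} (H : Set (X → ℤ)) (t : ℕ) : ℕ :=
  ⨆ x : XTree X t, (realizedPaths H x).ncard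

/-- A depth-`t` tree is shattered by `H` if every sign path is realized by some `h ∈ H`. -/
def Shattered {X : Type*} (H : Set (X → ℤ)) {t : ℕ} (x : XTree X t) : Prop :=
  ∀ ε : Fin t → ℤ, IsSignPath ε → ε ∈ realizedPaths H x

/-- An extended mistake tree: leaves are labeled by hypotheses, and each internal node
carries an example `a : X`, the label `y ∈ {-1,+1}` of its dashed downward edge
(the dashed edge goes to the child labeled `y`), and the two subtrees
(first the `-1`-child, then the `+1`-child). -/
inductive EMT (X : Type*) where
  | leaf : (X → ℤ) → EMT X
  | node : X → ℤ → EMT X → EMT X → EMT X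

/-- Validity of an extended mistake tree for the class `H`: the dashed-edge labels are in
`{-1,+1}` and every leaf is labeled by a hypothesis of `H` consistent with the
root-to-leaf path (and satisfying the accumulated constraint `P`). -/
def EMT.ValidFrom {X : Type*} (H : Set (X → ℤ)) (P : (X → ℤ) → Prop) : EMT X → Prop
  | .leaf h => h ∈ H ∧ P h
  | .node a y tneg tpos => (y = 1 ∨ y = -1) ∧
      EMT.ValidFrom H (fun h => P h ∧ h a = -1) tneg ∧
      EMT.ValidFrom H (fun h => P h ∧ h a = 1) tpos

/-- The set of pairs `(number of solid edges, length)` of root-to-leaf paths of an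
extended mistake tree. An edge to a child is solid iff that child is not the one the
dashed edge points to. -/
def EMT.paths {X : Type*} : EMT X → Set (ℕ × ℕ)
  | .leaf _ => {(0, 0)}
  | .node _ y tneg tpos =>
      (fun p => (p.1 + (if y = -1 then 0 else 1), p.2 + 1)) '' EMT.paths tneg ∪
      (fun p => (p.1 + (if y = 1 then 0 else 1), p.2 + 1)) '' EMT.paths tpos

/-- A tree is `(k,m)`-difficult iff every root-to-leaf path using at most `k` solid
edges has length at least `m`. -/
def EMT.Difficult {X : Type*} (T : EMT X) (k m : ℕ) : Prop :=
  ∀ p ∈ T.paths, p.1 ≤ k → m ≤ p.2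

lemma EMT.valid_exists {X : Type*} {H : Set (X → ℤ)} (T : EMT X) :
    ∀ {P : (X → ℤ) → Prop}, T.ValidFrom H P → ∃ h ∈ H, P h := by
  induction T with
  | leaf h => exact fun hv => ⟨h, hv.1, hv.2⟩
  | node a y tn tp ihn ihp =>
    intro P hv
    obtain ⟨h, hH, hP⟩ := ihn hv.2.1
    exact ⟨h, hH, hP.1⟩

lemma EMT.paths_fst_le_snd {X : Type*} (T : EMT X) : ∀ p ∈ T.paths, p.1 ≤ p.2 := by
  induction T with
  | leaf h =>
    intro p hp
    simp only [EMT.paths, Set.mem_singleton_iff] at hp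
    simp [hp]
  | node a y tn tp ihn ihp =>
    intro p hp
    rcases hp with ⟨q, hq, rfl⟩ | ⟨q, hq, rfl⟩
    · have := ihn q hq; dsimp; split <;> omega
    · have := ihp q hq; dsimp; split <;> omega

lemma EMT.shatter_of_valid {X : Type*} {H : Set (X → ℤ)} (T : EMT X) :
    ∀ (n : ℕ) (P : (X → ℤ) → Prop), T.ValidFrom H P → (∀ p ∈ T.paths, n ≤ p.2) →
    ∃ x : XTree X n, ∀ ε : Fin n → ℤ, IsSignPath ε →
      ∃ h ∈ H, P h ∧ ∀ s : Fin n,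
        ε s = h (x s (fun i => ε ⟨i.val, i.isLt.trans s.isLt⟩)) := by
  induction T with
  | leaf h =>
    intro n P hv hd
    have hn : n = 0 := Nat.le_zero.mp (hd (0, 0) rfl)
    subst hn
    exact ⟨fun s => s.elim0, fun ε _ => ⟨h, hv.1, hv.2, fun s => s.elim0⟩⟩
  | node a y tn tp ihn ihp =>
    intro n P hv hd
    match n with
    | 0 =>
      obtain ⟨h, hH, hP⟩ := EMT.valid_exists _ hv
      exact ⟨fun s => s.elim0, fun ε _ => ⟨h, hH, hP, fun s => s.elim0⟩⟩
    | (n + 1) =>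
      have hdn : ∀ p ∈ tn.paths, n ≤ p.2 := by
        intro p hp
        have := hd (p.1 + (if y = -1 then 0 else 1), p.2 + 1)
          (Set.mem_union_left _ ⟨p, hp, rfl⟩)
        omega
      have hdp : ∀ p ∈ tp.paths, n ≤ p.2 := by
        intro p hp
        have := hd (p.1 + (if y = 1 then 0 else 1), p.2 + 1)
          (Set.mem_union_right _ ⟨p, hp, rfl⟩)
        omega
      obtain ⟨xn, hxn⟩ := ihn n _ hv.2.1 hdn
      obtain ⟨xp, hxp⟩ := ihp n _ hv.2.2 hdp
      refine ⟨fun s => Fin.cases (fun _ => a)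
        (fun s' prev => if prev ⟨0, Nat.succ_pos _⟩ = 1
          then xp s' (fun i => prev i.succ)
          else xn s' (fun i => prev i.succ)) s, ?_⟩
      intro ε hε
      have hεts : IsSignPath (fun i : Fin n => ε i.succ) := fun s => hε s.succ
      rcases hε 0 with h1 | h1
      · obtain ⟨h, hH, ⟨hP, ha⟩, hcons⟩ := hxp _ hεts
        refine ⟨h, hH, hP, ?_⟩
        intro s
        refine Fin.cases ?_ ?_ s
        · exact h1.trans ha.symm
        · intro s'
          have hc := hcons s'
          simp only [Fin.cases_succ]
          have h0 : ε ⟨0, Nat.succ_pos n⟩ = 1 := by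
            rw [show (⟨0, Nat.succ_pos n⟩ : Fin (n+1)) = 0 from rfl]; exact h1
          rw [if_pos h0]
          convert hc using 3
          rfl
      · obtain ⟨h, hH, ⟨hP, ha⟩, hcons⟩ := hxn _ hεts
        refine ⟨h, hH, hP, ?_⟩
        intro s
        refine Fin.cases ?_ ?_ s
        · exact h1.trans ha.symm
        · intro s'
          have hc := hcons s'
          simp only [Fin.cases_succ]
          have h0 : ¬ (ε ⟨0, Nat.succ_pos n⟩ = 1) := by
            rw [show (⟨0, Nat.succ_pos n⟩ : Fin (n+1)) = 0 from rfl, h1]; decide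
          rw [if_neg h0]
          convert hc using 3
          rfl

lemma sum_choose_full (n c : ℕ) (h : n ≤ c) :
    ∑ i ∈ Finset.range (c + 1), n.choose i = 2 ^ n := by
  rw [← Nat.sum_range_choose n]
  symm
  apply Finset.sum_subset (Finset.range_subset_range.mpr (by omega))
  intro i _ hi
  simp only [Finset.mem_range, not_lt] at hi
  exact Nat.choose_eq_zero_of_lt (by omega)

theorem stmt18 {X : Type*} (H : Set (X → ℤ))
    (hsign : ∀ h ∈ H, ∀ a : X, h a = 1 ∨ h a = -1)
    (d : ℕ)
    (hLdim_lb : ∃ x : XTree X d, Shattered H x)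
    (hLdim_ub : ∀ x : XTree X (d + 1), ¬ Shattered H x)
    (k : ℕ) (m : ℕ)
    (hm : ∃ T : EMT X, T.ValidFrom H (fun _ => True) ∧ T.Difficult k m) :
    ((m : ℕ∞) ≤ ⨆ (t : ℕ) (_ : ∑ i ∈ Finset.range (k + 2), t.choose i ≤
        ∑ i ∈ Finset.range (d + 1), t.choose i), (t : ℕ∞)) ∧
    (d ≤ k → m ≤ d) := by
  obtain ⟨T, hvT, hdT⟩ := hm
  have key : d ≤ k → m ≤ d := by
    intro hdk
    by_contra hmd
    push_neg at hmd
    have hdepth : ∀ p ∈ T.paths, d + 1 ≤ p.2 := by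
      intro p hp
      rcases le_or_gt p.1 k with h | h
      · have := hdT p hp h; omega
      · have := EMT.paths_fst_le_snd T p hp; omega
    obtain ⟨x, hx⟩ := EMT.shatter_of_valid T (d + 1) _ hvT hdepth
    refine hLdim_ub x (fun ε hε => ?_)
    obtain ⟨h, hH, _, hc⟩ := hx ε hε
    exact ⟨hε, h, hH, hc⟩
  refine ⟨?_, key⟩
  have hcond : ∑ i ∈ Finset.range (k + 2), m.choose i ≤
      ∑ i ∈ Finset.range (d + 1), m.choose i := by
    rcases le_or_gt d k with hdk | hkd
    · have hmd : m ≤ d := key hdk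
      rw [sum_choose_full m (k + 1) (by omega), sum_choose_full m d hmd]
    · exact Finset.sum_le_sum_of_subset (Finset.range_subset_range.mpr (by omega))
  exact le_iSup₂ (f := fun (t : ℕ) (_ : ∑ i ∈ Finset.range (k + 2), t.choose i ≤
      ∑ i ∈ Finset.range (d + 1), t.choose i) => (t : ℕ∞)) m hcond
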